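/- (Theorem 1(ii), odd r) Assume W > 0, 4I > zW, and r = 2k+1 is odd. Then H_i^0 attains its minimum over all ion configurations exactly at the configurations for which there is a sublattice (Λᵉ or Λᵒ) on whose sites n_x = k while on the sites of the complementary sublattice n_x = k+1. If moreover |Λᵉ| = |Λᵒ| = |Λ|/2, the number of such minimizing configurations equals 2·(C(r,k))^{|Λ|}, where C(r,k) = r!/(k!(r−k)!). -/
import Mathlib


open Finset

/-- Occupation number (0 or 1) attached to a Boolean occupancy variable. -/
noncomputable def occ (b : Bool) : ℝ := if b then 1 else 0

/-- Total number of ions at site `x` (as a real number): `n_x = Σ_σ n_{x,σ}`. -/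
noncomputable def nsite {V : Type*} {r : ℕ} (C : V → Fin r → Bool) (x : V) : ℝ :=
  ∑ σ : Fin r, occ (C x σ)

/-- Total number of ions at site `x` (as a natural number). -/
def nnat {V : Type*} {r : ℕ} (C : V → Fin r → Bool) (x : V) : ℕ :=
  ∑ σ : Fin r, (if C x σ then 1 else 0)

/-- The classical Hamiltonian
`H_i^0(C) = 2I Σ_x Σ_{σ'<σ''} (n_{x,σ'} - 1/2)(n_{x,σ''} - 1/2)
          + (W/2) Σ_{⟨x,y⟩} (n_x - r/2)(n_y - r/2)`,
where the sum over edges `⟨x,y⟩` (each edge counted once) is written as half the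
symmetric double sum over ordered adjacent pairs. -/
noncomputable def H0 {V : Type*} [Fintype V] (G : SimpleGraph V) [DecidableRel G.Adj]
    (r : ℕ) (I W : ℝ) (C : V → Fin r → Bool) : ℝ :=
  2 * I * ∑ x : V, ∑ p ∈ Finset.univ.filter (fun p : Fin r × Fin r => p.1 < p.2),
      (occ (C x p.1) - 1 / 2) * (occ (C x p.2) - 1 / 2)
  + W / 2 * ((∑ x : V, ∑ y : V,
      (if G.Adj x y then (nsite C x - r / 2) * (nsite C y - r / 2) else 0)) / 2)

/-! ### auxiliary machinery -/

lemma sum_lt_pairs {r : ℕ} (f : Fin r → ℝ) :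
    ∑ p ∈ Finset.univ.filter (fun p : Fin r × Fin r => p.1 < p.2), f p.1 * f p.2
      = ((∑ σ, f σ) ^ 2 - ∑ σ, f σ ^ 2) / 2 := by
  have hsq : (∑ σ, f σ) ^ 2 = ∑ p : Fin r × Fin r, f p.1 * f p.2 := by
    rw [sq, Fintype.sum_mul_sum, Fintype.sum_prod_type]
  have hsplit := Finset.sum_filter_add_sum_filter_not (Finset.univ : Finset (Fin r × Fin r))
      (fun p => p.1 < p.2) (fun p => f p.1 * f p.2)
  have hsplit2 := Finset.sum_filter_add_sum_filter_not
      ((Finset.univ : Finset (Fin r × Fin r)).filter (fun p => ¬ p.1 < p.2))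
      (fun p => p.2 < p.1) (fun p => f p.1 * f p.2)
  have e1 : ((Finset.univ : Finset (Fin r × Fin r)).filter (fun p => ¬ p.1 < p.2)).filter
      (fun p => p.2 < p.1) = Finset.univ.filter (fun p : Fin r × Fin r => p.2 < p.1) := by
    rw [Finset.filter_filter]
    apply Finset.filter_congr
    intro p _
    simp only [and_iff_right_iff_imp]
    intro h; exact fun h' => absurd h (not_lt.mpr h'.le)
  have e2 : ((Finset.univ : Finset (Fin r × Fin r)).filter (fun p => ¬ p.1 < p.2)).filter
      (fun p => ¬ p.2 < p.1) = Finset.univ.filter (fun p : Fin r × Fin r => p.1 = p.2) := by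
    rw [Finset.filter_filter]
    apply Finset.filter_congr
    intro p _
    constructor
    · rintro ⟨h1, h2⟩; exact le_antisymm (not_lt.mp h2) (not_lt.mp h1)
    · rintro h; rw [h]; simp
  have hgt : ∑ p ∈ Finset.univ.filter (fun p : Fin r × Fin r => p.2 < p.1), f p.1 * f p.2
      = ∑ p ∈ Finset.univ.filter (fun p : Fin r × Fin r => p.1 < p.2), f p.1 * f p.2 := by
    apply Finset.sum_nbij' (fun p => Prod.swap p) (fun p => Prod.swap p) <;>
      simp [mul_comm]
  have hdiag : ∑ p ∈ Finset.univ.filter (fun p : Fin r × Fin r => p.1 = p.2), f p.1 * f p.2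
      = ∑ σ : Fin r, f σ ^ 2 := by
    apply Finset.sum_nbij' (fun p => p.1) (fun σ => (σ, σ))
    · simp
    · simp
    · intro p hp; simp only [Finset.mem_filter] at hp; exact Prod.ext rfl hp.2
    · simp
    · intro p hp; simp only [Finset.mem_filter] at hp; rw [← hp.2, sq]
  rw [e1, e2, hdiag, hgt] at hsplit2
  rw [← hsplit2] at hsplit
  rw [hsq, ← hsplit]
  ring

lemma nsite_eq_nnat {V : Type*} {r : ℕ} (C : V → Fin r → Bool) (x : V) :
    nsite C x = (nnat C x : ℝ) := by
  unfold nsite nnat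
  push_cast
  refine Finset.sum_congr rfl fun σ _ => ?_
  cases C x σ <;> simp [occ]

/-- the "spin" `m_x = n_x - r/2`. -/
noncomputable def msp {V : Type*} (r : ℕ) (C : V → Fin r → Bool) (x : V) : ℝ :=
  (nnat C x : ℝ) - r / 2

lemma msp_eq {V : Type*} {r : ℕ} (C : V → Fin r → Bool) (x : V) :
    nsite C x - r / 2 = msp r C x := by
  rw [nsite_eq_nnat, msp]

noncomputable def Ssum {V : Type*} [Fintype V] (r : ℕ) (C : V → Fin r → Bool) : ℝ :=
  ∑ x : V, msp r C x ^ 2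

noncomputable def Tsum {V : Type*} [Fintype V] (G : SimpleGraph V) [DecidableRel G.Adj]
    (r : ℕ) (C : V → Fin r → Bool) : ℝ :=
  ∑ x : V, ∑ y : V, (if G.Adj x y then (msp r C x + msp r C y) ^ 2 else 0)

section main
variable {V : Type*} [Fintype V] (G : SimpleGraph V) [DecidableRel G.Adj]

lemma sum_ite_adj (z : ℕ) (hreg : G.IsRegularOfDegree z) (x : V) (c : ℝ) :
    ∑ y : V, (if G.Adj x y then c else 0) = z * c := by
  rw [Finset.sum_ite, Finset.sum_const, Finset.sum_const_zero, add_zero,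
    ← SimpleGraph.neighborFinset_eq_filter]
  have hd : #(G.neighborFinset x) = z := hreg x
  rw [hd, nsmul_eq_mul]

lemma H0_decomp (z r : ℕ) (hreg : G.IsRegularOfDegree z) (I W : ℝ)
    (C : V → Fin r → Bool) :
    H0 G r I W C = (I - z * W / 4) * Ssum r C + W / 8 * Tsum G r C
      - I * r * Fintype.card V / 4 := by
  have honsite : ∀ x, ∑ p ∈ Finset.univ.filter (fun p : Fin r × Fin r => p.1 < p.2),
      (occ (C x p.1) - 1 / 2) * (occ (C x p.2) - 1 / 2) = (msp r C x ^ 2 - r / 4) / 2 := by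
    intro x
    rw [sum_lt_pairs (fun σ => occ (C x σ) - 1 / 2)]
    have h1 : ∑ σ : Fin r, (occ (C x σ) - 1 / 2) = msp r C x := by
      rw [Finset.sum_sub_distrib, Finset.sum_const, Finset.card_univ, Fintype.card_fin,
        nsmul_eq_mul]
      rw [show (∑ σ : Fin r, occ (C x σ)) = nsite C x from rfl, nsite_eq_nnat, msp]
      ring
    have h2 : ∑ σ : Fin r, (occ (C x σ) - 1 / 2) ^ 2 = (r : ℝ) / 4 := by
      have hc : ∀ σ : Fin r, (occ (C x σ) - 1 / 2) ^ 2 = (1 : ℝ) / 4 := by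
        intro σ; cases C x σ <;> simp [occ] <;> norm_num
      simp only [hc, Finset.sum_const, Finset.card_univ, Fintype.card_fin, nsmul_eq_mul]
      ring
    rw [h1, h2]
  have hF1 : ∑ x : V, ∑ y : V, (if G.Adj x y then msp r C x ^ 2 else 0)
      = z * ∑ x : V, msp r C x ^ 2 := by
    rw [Finset.mul_sum]
    exact Finset.sum_congr rfl fun x _ => sum_ite_adj G z hreg x (msp r C x ^ 2)
  have hF2 : ∑ x : V, ∑ y : V, (if G.Adj x y then msp r C y ^ 2 else 0)
      = z * ∑ x : V, msp r C x ^ 2 := by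
    rw [Finset.sum_comm, Finset.mul_sum]
    refine Finset.sum_congr rfl fun y _ => ?_
    have hcomm : ∀ x : V, (if G.Adj x y then msp r C y ^ 2 else 0)
        = (if G.Adj y x then msp r C y ^ 2 else 0) := by
      intro x
      by_cases h : G.Adj x y
      · rw [if_pos h, if_pos h.symm]
      · rw [if_neg h, if_neg (fun h' => h h'.symm)]
    simp only [hcomm]
    exact sum_ite_adj G z hreg y (msp r C y ^ 2)
  have hTexp : Tsum G r C
      = (∑ x : V, ∑ y : V, (if G.Adj x y then msp r C x ^ 2 else 0))
        + 2 * (∑ x : V, ∑ y : V, (if G.Adj x y then msp r C x * msp r C y else 0))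
        + (∑ x : V, ∑ y : V, (if G.Adj x y then msp r C y ^ 2 else 0)) := by
    unfold Tsum
    rw [Finset.mul_sum, ← Finset.sum_add_distrib, ← Finset.sum_add_distrib]
    refine Finset.sum_congr rfl fun x _ => ?_
    rw [Finset.mul_sum, ← Finset.sum_add_distrib, ← Finset.sum_add_distrib]
    refine Finset.sum_congr rfl fun y _ => ?_
    split_ifs <;> ring
  have hE' : ∑ x : V, ∑ y : V,
        (if G.Adj x y then (nsite C x - r / 2) * (nsite C y - r / 2) else 0)
      = ∑ x : V, ∑ y : V, (if G.Adj x y then msp r C x * msp r C y else 0) := by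
    refine Finset.sum_congr rfl fun x _ => Finset.sum_congr rfl fun y _ => ?_
    rw [msp_eq, msp_eq]
  have hsum : ∑ x : V, (msp r C x ^ 2 - r / 4) / 2
      = ((∑ x : V, msp r C x ^ 2) - (Fintype.card V) * (r / 4)) / 2 := by
    rw [← Finset.sum_div, Finset.sum_sub_distrib, Finset.sum_const, Finset.card_univ,
      nsmul_eq_mul]
  unfold H0
  simp only [honsite]
  rw [hE', hsum]
  unfold Ssum
  linear_combination (-(W/8)) * hTexp + (-(W/8)) * hF1 + (-(W/8)) * hF2

end main

lemma msp_sq_ge {V : Type*} {r k : ℕ} (hrk : r = 2 * k + 1)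
    (C : V → Fin r → Bool) (x : V) : (1 : ℝ) / 4 ≤ msp r C x ^ 2 := by
  unfold msp
  subst hrk
  rcases Nat.lt_or_ge (nnat C x) (k + 1) with h | h
  · have : (nnat C x : ℝ) ≤ k := by exact_mod_cast Nat.lt_succ_iff.mp h
    push_cast
    nlinarith
  · have : ((k : ℝ) + 1) ≤ nnat C x := by exact_mod_cast h
    push_cast
    nlinarith

lemma msp_sq_of {V : Type*} {r k : ℕ} (hrk : r = 2 * k + 1)
    (C : V → Fin r → Bool) (x : V) (h : nnat C x = k ∨ nnat C x = k + 1) :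
    msp r C x ^ 2 = 1 / 4 := by
  unfold msp
  subst hrk
  rcases h with h | h <;> rw [h] <;> push_cast <;> ring

lemma of_msp_sq {V : Type*} {r k : ℕ} (hrk : r = 2 * k + 1)
    (C : V → Fin r → Bool) (x : V) (h : msp r C x ^ 2 = 1 / 4) :
    nnat C x = k ∨ nnat C x = k + 1 := by
  unfold msp at h
  subst hrk
  have hz : ((nnat C x : ℝ) - k) * ((nnat C x : ℝ) - (k + 1)) = 0 := by
    push_cast at h ⊢
    nlinarith
  rcases mul_eq_zero.mp hz with h' | h'
  · left
    have : (nnat C x : ℝ) = k := by linarith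
    exact_mod_cast this
  · right
    have : (nnat C x : ℝ) = (k : ℝ) + 1 := by linarith
    exact_mod_cast this

lemma walk_invariant {V : Type*} {G : SimpleGraph V} (Q : V → Prop)
    (hQ : ∀ x y, G.Adj x y → (Q x ↔ Q y)) {x y : V} (w : G.Walk x y) : Q x ↔ Q y := by
  induction w with
  | nil => exact Iff.rfl
  | cons h _ ih => exact (hQ _ _ h).trans ih

lemma cnt_decide (r c : ℕ) (hc : c ≤ r) :
    (∑ σ : Fin r, if (decide (σ.val < c) : Bool) then 1 else 0) = c := by
  simp only [decide_eq_true_eq]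
  rw [Fin.sum_univ_eq_sum_range (fun j => if j < c then 1 else 0) r]
  rw [← Finset.card_filter]
  have : (Finset.range r).filter (· < c) = Finset.range c := by
    ext j; simp only [Finset.mem_filter, Finset.mem_range]; omega
  rw [this, Finset.card_range]

lemma card_cnt (r c : ℕ) :
    Nat.card {f : Fin r → Bool // (∑ σ : Fin r, if f σ then 1 else 0) = c}
      = r.choose c := by
  rw [Nat.card_eq_fintype_card]
  have e : {f : Fin r → Bool // (∑ σ : Fin r, if f σ then 1 else 0) = c}
      ≃ {s : Finset (Fin r) // s.card = c} :=
    { toFun := fun f => ⟨Finset.univ.filter (fun σ => f.1 σ = true), by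
        rw [Finset.card_filter]
        simpa using f.2⟩
      invFun := fun s => ⟨fun σ => decide (σ ∈ s.1), by
        simp only [decide_eq_true_eq]
        rw [← Finset.card_filter]
        rw [Finset.filter_mem_eq_inter, Finset.univ_inter]
        exact s.2⟩
      left_inv := fun f => by
        ext σ
        simp
      right_inv := fun s => by
        ext σ
        simp }
  rw [Fintype.card_congr e, Fintype.card_finset_len, Fintype.card_fin]

lemma card_config {V : Type*} [Fintype V] [DecidableEq V] (r : ℕ) (c : V → ℕ) :
    Nat.card {C : V → Fin r → Bool | ∀ x, nnat C x = c x}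
      = ∏ x : V, r.choose (c x) := by
  have e : {C : V → Fin r → Bool | ∀ x, nnat C x = c x}
      ≃ ∀ x : V, {f : Fin r → Bool // (∑ σ : Fin r, if f σ then 1 else 0) = c x} :=
    Equiv.subtypePiEquivPi (p := fun x (f : Fin r → Bool) =>
      (∑ σ : Fin r, if f σ then 1 else 0) = c x)
  rw [Nat.card_congr e, Nat.card_pi]
  exact Finset.prod_congr rfl fun x _ => card_cnt r (c x)

/-- **Theorem 1(ii), odd `r`.** For `W > 0`, `4I > zW`, `r = 2k+1`, the
minimizers of `H_i^0` are exactly the configurations with `n_x = k` on one sublattice and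
`n_x = k+1` on the other; if `|Λᵉ| = |Λᵒ|`, their number is `2·C(r,k)^{|Λ|}`. -/
theorem statement7
    {V : Type*} [Fintype V] [DecidableEq V]
    (G : SimpleGraph V) [DecidableRel G.Adj]
    (z r : ℕ) (hz : 2 ≤ z) (hr : 2 ≤ r)
    (hreg : G.IsRegularOfDegree z) (hconn : G.Connected)
    (Λe Λo : Finset V)
    (hcover : ∀ v : V, v ∈ Λe ∨ v ∈ Λo) (hdisj : Disjoint Λe Λo)
    (hbip : ∀ x y : V, G.Adj x y → (x ∈ Λe ∧ y ∈ Λo) ∨ (x ∈ Λo ∧ y ∈ Λe))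
    (I W : ℝ) (hW : 0 < W) (hIW : (z : ℝ) * W < 4 * I) (k : ℕ) (hrk : r = 2 * k + 1) :
    {C : V → Fin r → Bool | ∀ C' : V → Fin r → Bool, H0 G r I W C ≤ H0 G r I W C'} =
      {C : V → Fin r → Bool |
        ((∀ x ∈ Λe, nnat C x = k) ∧ (∀ x ∈ Λo, nnat C x = k + 1)) ∨
        ((∀ x ∈ Λe, nnat C x = k + 1) ∧ (∀ x ∈ Λo, nnat C x = k))} ∧
    (Λe.card = Λo.card →
      Nat.card {C : V → Fin r → Bool |
          ∀ C' : V → Fin r → Bool, H0 G r I W C ≤ H0 G r I W C'} =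
        2 * (Nat.choose r k) ^ (Fintype.card V)) := by
  obtain ⟨v0⟩ : Nonempty V := hconn.nonempty
  have hc4 : (0:ℝ) < I - (z:ℝ) * W / 4 := by linarith
  have hnotem : ∀ v : V, v ∈ Λo → v ∉ Λe := fun v hv => Finset.disjoint_right.mp hdisj hv
  -- lower bound
  have hSge : ∀ C : V → Fin r → Bool, ((Fintype.card V : ℝ))/4 ≤ Ssum r C := by
    intro C
    unfold Ssum
    calc ((Fintype.card V : ℝ))/4 = ∑ _x : V, (1:ℝ)/4 := by
          rw [Finset.sum_const, Finset.card_univ, nsmul_eq_mul]; ring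
      _ ≤ ∑ x : V, msp r C x ^ 2 := Finset.sum_le_sum fun x _ => msp_sq_ge hrk C x
  have hTge : ∀ C : V → Fin r → Bool, 0 ≤ Tsum G r C := by
    intro C
    refine Finset.sum_nonneg fun x _ => Finset.sum_nonneg fun y _ => ?_
    split_ifs
    · positivity
    · exact le_rfl
  have hlow : ∀ C : V → Fin r → Bool,
      (I - (z:ℝ) * W / 4) * ((Fintype.card V : ℝ)/4) - I * r * Fintype.card V / 4
        ≤ H0 G r I W C := by
    intro C
    rw [H0_decomp G z r hreg I W C]
    have ha : (I - (z:ℝ)*W/4) * ((Fintype.card V : ℝ)/4) ≤ (I - (z:ℝ)*W/4) * Ssum r C :=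
      mul_le_mul_of_nonneg_left (hSge C) hc4.le
    have hb : 0 ≤ W/8 * Tsum G r C := mul_nonneg (by linarith) (hTge C)
    linarith
  -- msp sums for the k / k+1 pattern
  have hmsum : ∀ (C : V → Fin r → Bool) (x y : V), nnat C x = k → nnat C y = k + 1 →
      msp r C x + msp r C y = 0 := by
    intro C x y h1 h2
    unfold msp
    rw [h1, h2, hrk]
    push_cast
    ring
  -- value on alternating configurations
  have hval : ∀ C : V → Fin r → Bool,
      (∀ x y, G.Adj x y → msp r C x + msp r C y = 0) →
      (∀ x, nnat C x = k ∨ nnat C x = k + 1) →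
      H0 G r I W C =
        (I - (z:ℝ) * W / 4) * ((Fintype.card V : ℝ)/4) - I * r * Fintype.card V / 4 := by
    intro C hadj hk
    rw [H0_decomp G z r hreg I W C]
    have hs : Ssum r C = (Fintype.card V : ℝ)/4 := by
      unfold Ssum
      rw [Finset.sum_congr rfl fun x _ => msp_sq_of hrk C x (hk x), Finset.sum_const,
        Finset.card_univ, nsmul_eq_mul]
      ring
    have ht : Tsum G r C = 0 := by
      unfold Tsum
      refine Finset.sum_eq_zero fun x _ => Finset.sum_eq_zero fun y _ => ?_
      by_cases h : G.Adj x y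
      · rw [if_pos h, hadj x y h]; ring
      · rw [if_neg h]
    rw [hs, ht]
    ring
  -- characterization of the equality case
  have hchar : ∀ C : V → Fin r → Bool,
      H0 G r I W C =
        (I - (z:ℝ) * W / 4) * ((Fintype.card V : ℝ)/4) - I * r * Fintype.card V / 4 →
      (∀ x, msp r C x ^ 2 = 1/4) ∧ (∀ x y, G.Adj x y → msp r C x + msp r C y = 0) := by
    intro C hC
    rw [H0_decomp G z r hreg I W C] at hC
    have h1 := hSge C
    have h2 := hTge C
    have hS : Ssum r C = (Fintype.card V : ℝ)/4 := by
      by_contra hne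
      have hlt : (Fintype.card V : ℝ)/4 < Ssum r C := lt_of_le_of_ne h1 (Ne.symm hne)
      have ha : (I - (z:ℝ)*W/4) * ((Fintype.card V : ℝ)/4) < (I - (z:ℝ)*W/4) * Ssum r C :=
        mul_lt_mul_of_pos_left hlt hc4
      have hb : 0 ≤ W/8 * Tsum G r C := mul_nonneg (by linarith) h2
      linarith
    have hT : Tsum G r C = 0 := by
      have ha : (I - (z:ℝ)*W/4) * Ssum r C = (I - (z:ℝ)*W/4) * ((Fintype.card V : ℝ)/4) := by
        rw [hS]
      have hb : W/8 * Tsum G r C = 0 := by linarith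
      have hW8 : (W:ℝ)/8 ≠ 0 := by positivity
      exact (mul_eq_zero.mp hb).resolve_left hW8
    constructor
    · intro x
      by_contra hne
      have hstrict : ∑ _y : V, (1:ℝ)/4 < ∑ y : V, msp r C y ^ 2 :=
        Finset.sum_lt_sum (fun y _ => msp_sq_ge hrk C y)
          ⟨x, Finset.mem_univ x, lt_of_le_of_ne (msp_sq_ge hrk C x) (Ne.symm hne)⟩
      have hconst : ∑ _y : V, (1:ℝ)/4 = (Fintype.card V : ℝ)/4 := by
        rw [Finset.sum_const, Finset.card_univ, nsmul_eq_mul]; ring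
      have : (Fintype.card V : ℝ)/4 < Ssum r C := by
        unfold Ssum; rw [← hconst]; exact hstrict
      linarith [hS, this]
    · intro x y hxy
      have hinner : ∀ x ∈ (Finset.univ : Finset V),
          (0:ℝ) ≤ ∑ y : V, (if G.Adj x y then (msp r C x + msp r C y) ^ 2 else 0) := by
        intro x _
        refine Finset.sum_nonneg fun y _ => ?_
        split_ifs
        · positivity
        · exact le_rfl
      have h0 := (Finset.sum_eq_zero_iff_of_nonneg hinner).mp hT x (Finset.mem_univ x)
      have hterm : ∀ y ∈ (Finset.univ : Finset V),
          (0:ℝ) ≤ (if G.Adj x y then (msp r C x + msp r C y) ^ 2 else 0) := by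
        intro y _
        split_ifs
        · positivity
        · exact le_rfl
      have h00 := (Finset.sum_eq_zero_iff_of_nonneg hterm).mp h0 y (Finset.mem_univ y)
      rw [if_pos hxy] at h00
      exact pow_eq_zero_iff two_ne_zero |>.mp h00
  -- the reference minimizing configuration
  set C0 : V → Fin r → Bool := fun x σ => decide (σ.val < (if x ∈ Λe then k else k + 1))
    with hC0def
  have hC0n : ∀ x : V, nnat C0 x = (if x ∈ Λe then k else k + 1) := by
    intro x
    show (∑ σ : Fin r, if (decide (σ.val < (if x ∈ Λe then k else k + 1)) : Bool)
        then 1 else 0) = _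
    exact cnt_decide r _ (by split <;> omega)
  have hC0k : ∀ x : V, nnat C0 x = k ∨ nnat C0 x = k + 1 := by
    intro x
    rw [hC0n x]
    split
    · exact Or.inl rfl
    · exact Or.inr rfl
  have hC0adj : ∀ x y, G.Adj x y → msp r C0 x + msp r C0 y = 0 := by
    intro x y hxy
    rcases hbip x y hxy with ⟨hx, hy⟩ | ⟨hx, hy⟩
    · exact hmsum C0 x y (by rw [hC0n x, if_pos hx]) (by rw [hC0n y, if_neg (hnotem y hy)])
    · rw [add_comm]
      exact hmsum C0 y x (by rw [hC0n y, if_pos hy]) (by rw [hC0n x, if_neg (hnotem x hx)])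
  have hC0val := hval C0 hC0adj hC0k
  -- part 1 : set equality
  have hset : {C : V → Fin r → Bool | ∀ C' : V → Fin r → Bool, H0 G r I W C ≤ H0 G r I W C'} =
      {C : V → Fin r → Bool |
        ((∀ x ∈ Λe, nnat C x = k) ∧ (∀ x ∈ Λo, nnat C x = k + 1)) ∨
        ((∀ x ∈ Λe, nnat C x = k + 1) ∧ (∀ x ∈ Λo, nnat C x = k))} := by
    ext C
    simp only [Set.mem_setOf_eq]
    constructor
    · intro hmin
      have heq : H0 G r I W C =
          (I - (z:ℝ) * W / 4) * ((Fintype.card V : ℝ)/4) - I * r * Fintype.card V / 4 :=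
        le_antisymm (hC0val ▸ hmin C0) (hlow C)
      obtain ⟨hsq, hadj⟩ := hchar C heq
      have hk2 : ∀ x, nnat C x = k ∨ nnat C x = k + 1 := fun x => of_msp_sq hrk C x (hsq x)
      have hQadj : ∀ x y, G.Adj x y →
          ((nnat C x = k ↔ x ∈ Λe) ↔ (nnat C y = k ↔ y ∈ Λe)) := by
        intro x y hxy
        have hxk : nnat C x = k ↔ ¬ nnat C y = k := by
          constructor
          · intro hx hy
            have hs := hadj x y hxy
            unfold msp at hs
            rw [hx, hy, hrk] at hs
            push_cast at hs
            linarith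
          · intro hy
            rcases hk2 x with h | h
            · exact h
            · exfalso
              rcases hk2 y with h' | h'
              · exact hy h'
              · have hs := hadj x y hxy
                unfold msp at hs
                rw [h, h', hrk] at hs
                push_cast at hs
                linarith
        have hxe : x ∈ Λe ↔ ¬ y ∈ Λe := by
          rcases hbip x y hxy with ⟨hx, hy⟩ | ⟨hx, hy⟩
          · exact ⟨fun _ => hnotem y hy, fun _ => hx⟩
          · exact ⟨fun h => absurd h (hnotem x hx), fun h => absurd hy h⟩
        tauto
      have hQall : ∀ x : V, ((nnat C x = k ↔ x ∈ Λe) ↔ (nnat C v0 = k ↔ v0 ∈ Λe)) := by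
        intro x
        obtain ⟨w⟩ := hconn.preconnected x v0
        exact walk_invariant (fun v => (nnat C v = k ↔ v ∈ Λe)) hQadj w
      by_cases hQ0 : nnat C v0 = k ↔ v0 ∈ Λe
      · left
        have hq : ∀ x, nnat C x = k ↔ x ∈ Λe := fun x => (hQall x).mpr hQ0
        refine ⟨fun x hx => (hq x).mpr hx, fun x hx => ?_⟩
        rcases hk2 x with h | h
        · exact absurd ((hq x).mp h) (hnotem x hx)
        · exact h
      · right
        have hq : ∀ x, ¬(nnat C x = k ↔ x ∈ Λe) := fun x h => hQ0 ((hQall x).mp h)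
        constructor
        · intro x hx
          rcases hk2 x with h | h
          · exact absurd (iff_of_true h hx) (hq x)
          · exact h
        · intro x hx
          rcases hk2 x with h | h
          · exact h
          · exact absurd (iff_of_false (by omega) (hnotem x hx)) (hq x)
    · intro hrhs C'
      have hCk : ∀ x, nnat C x = k ∨ nnat C x = k + 1 := by
        intro x
        rcases hrhs with ⟨h1, h2⟩ | ⟨h1, h2⟩ <;> rcases hcover x with hx | hx
        · exact Or.inl (h1 x hx)
        · exact Or.inr (h2 x hx)
        · exact Or.inr (h1 x hx)
        · exact Or.inl (h2 x hx)
      have hCadj : ∀ x y, G.Adj x y → msp r C x + msp r C y = 0 := by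
        intro x y hxy
        rcases hrhs with ⟨h1, h2⟩ | ⟨h1, h2⟩ <;> rcases hbip x y hxy with ⟨hx, hy⟩ | ⟨hx, hy⟩
        · exact hmsum C x y (h1 x hx) (h2 y hy)
        · rw [add_comm]; exact hmsum C y x (h1 y hy) (h2 x hx)
        · rw [add_comm]; exact hmsum C y x (h2 y hy) (h1 x hx)
        · exact hmsum C x y (h2 x hx) (h1 y hy)
      rw [hval C hCadj hCk]
      exact hlow C'
  refine ⟨hset, fun _ => ?_⟩
  rw [hset]
  -- rewrite as a disjoint union of two product sets
  have hAB : {C : V → Fin r → Bool |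
        ((∀ x ∈ Λe, nnat C x = k) ∧ (∀ x ∈ Λo, nnat C x = k + 1)) ∨
        ((∀ x ∈ Λe, nnat C x = k + 1) ∧ (∀ x ∈ Λo, nnat C x = k))}
      = {C : V → Fin r → Bool | ∀ x, nnat C x = (if x ∈ Λe then k else k + 1)}
        ∪ {C : V → Fin r → Bool | ∀ x, nnat C x = (if x ∈ Λe then k + 1 else k)} := by
    ext C
    simp only [Set.mem_setOf_eq, Set.mem_union]
    apply or_congr
    · constructor
      · rintro ⟨ha, hb⟩ x
        by_cases hx : x ∈ Λe
        · rw [if_pos hx]; exact ha x hx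
        · rw [if_neg hx]; exact hb x ((hcover x).resolve_left hx)
      · intro h
        exact ⟨fun x hx => by rw [h x, if_pos hx],
          fun x hx => by rw [h x, if_neg (hnotem x hx)]⟩
    · constructor
      · rintro ⟨ha, hb⟩ x
        by_cases hx : x ∈ Λe
        · rw [if_pos hx]; exact ha x hx
        · rw [if_neg hx]; exact hb x ((hcover x).resolve_left hx)
      · intro h
        exact ⟨fun x hx => by rw [h x, if_pos hx],
          fun x hx => by rw [h x, if_neg (hnotem x hx)]⟩
  rw [hAB]
  have hdisjAB : Disjoint
      {C : V → Fin r → Bool | ∀ x, nnat C x = (if x ∈ Λe then k else k + 1)}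
      {C : V → Fin r → Bool | ∀ x, nnat C x = (if x ∈ Λe then k + 1 else k)} := by
    rw [Set.disjoint_left]
    intro C hA hB
    have h1 := hA v0
    have h2 := hB v0
    by_cases hv : v0 ∈ Λe
    · rw [if_pos hv] at h1; rw [if_pos hv] at h2; omega
    · rw [if_neg hv] at h1; rw [if_neg hv] at h2; omega
  have hchoose : ∀ c : V → ℕ, (∀ x, c x = k ∨ c x = k + 1) →
      Nat.card {C : V → Fin r → Bool | ∀ x, nnat C x = c x}
        = (r.choose k) ^ (Fintype.card V) := by
    intro c hc
    rw [card_config r c]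
    have hfac : ∀ x : V, r.choose (c x) = r.choose k := by
      intro x
      rcases hc x with h | h
      · rw [h]
      · rw [h]
        have h1 : r - k = k + 1 := by omega
        rw [← h1, Nat.choose_symm (by omega)]
    rw [Finset.prod_congr rfl fun x _ => hfac x, Finset.prod_const, Finset.card_univ]
  rw [Nat.card_coe_set_eq, Set.ncard_union_eq hdisjAB (Set.toFinite _) (Set.toFinite _)]
  rw [← Nat.card_coe_set_eq, ← Nat.card_coe_set_eq]
  rw [hchoose _ (fun x => by split <;> simp), hchoose _ (fun x => by split <;> simp)]
  ring
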